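/- Let ℓ ≥ 1 be a natural number and let x be a real number with |x| < 1. Then the series ∑_{k=0}^∞ (2k + 1)·(∏_{j=0}^{ℓ−1} (k − j)·(k + 1 + j))·x^k converges and equals (2ℓ + 1)! · x^ℓ·(1 + x) / (1 − x)^{2ℓ+2}. -/

import Mathlib

private lemma prod_fact (l : ℕ) : ∀ m : ℕ,
    m.factorial * ∏ j ∈ Finset.range l, ((m + l - j) * (m + l + 1 + j)) =
      (m + 2 * l).factorial := by
  induction l with
  | zero => intro m; simp
  | succ l ih =>
    intro m
    have h1 : ∏ j ∈ Finset.range (l + 1), ((m + (l + 1) - j) * (m + (l + 1) + 1 + j)) =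
        (∏ j ∈ Finset.range l, ((m + 1 + l - j) * (m + 1 + l + 1 + j))) *
          ((m + 1) * (m + 2 * (l + 1))) := by
      rw [Finset.prod_range_succ]
      congr 1
      · exact Finset.prod_congr rfl fun j hj => by
          simp only [Finset.mem_range] at hj; congr 1 <;> omega
      · congr 1 <;> omega
    rw [h1]
    calc m.factorial * ((∏ j ∈ Finset.range l, ((m + 1 + l - j) * (m + 1 + l + 1 + j))) *
          ((m + 1) * (m + 2 * (l + 1))))
        = ((m + 1).factorial * ∏ j ∈ Finset.range l, ((m + 1 + l - j) * (m + 1 + l + 1 + j))) *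
            (m + 2 * (l + 1)) := by rw [Nat.factorial_succ m]; ring
      _ = (m + 1 + 2 * l).factorial * (m + 2 * (l + 1)) := by rw [ih (m + 1)]
      _ = (m + 2 * (l + 1)).factorial := by
          rw [show m + 2 * (l + 1) = (m + 1 + 2 * l) + 1 from by omega,
            Nat.factorial_succ (m + 1 + 2 * l)]
          ring

private lemma key_nat (l m : ℕ) :
    (2 * (m + l) + 1) * ∏ j ∈ Finset.range l, ((m + l - j) * (m + l + 1 + j)) =
      (2 * l + 1).factorial *
        ((m + 2 * l + 1).choose (2 * l + 1) + (m + 2 * l).choose (2 * l + 1)) := by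
  have hfac : 0 < m.factorial := Nat.factorial_pos m
  apply Nat.eq_of_mul_eq_mul_left hfac
  have h1 : (m + 2 * l + 1).choose (2 * l + 1) * (2 * l + 1).factorial * m.factorial =
      (m + 2 * l + 1).factorial := by
    have := Nat.choose_mul_factorial_mul_factorial (n := m + 2 * l + 1) (k := 2 * l + 1)
      (by omega)
    rwa [show m + 2 * l + 1 - (2 * l + 1) = m by omega] at this
  have h2 : (m + 2 * l).choose (2 * l + 1) * (2 * l + 1).factorial * m.factorial =
      m * (m + 2 * l).factorial := by
    cases m with
    | zero =>
      rw [Nat.choose_eq_zero_of_lt (show 0 + 2 * l < 2 * l + 1 by omega)]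
      simp
    | succ m' =>
      have h3 := Nat.choose_mul_factorial_mul_factorial (n := m' + 1 + 2 * l) (k := 2 * l + 1)
        (by omega)
      rw [show m' + 1 + 2 * l - (2 * l + 1) = m' by omega] at h3
      calc (m' + 1 + 2 * l).choose (2 * l + 1) * (2 * l + 1).factorial * (m' + 1).factorial
          = ((m' + 1 + 2 * l).choose (2 * l + 1) * (2 * l + 1).factorial * m'.factorial)
            * (m' + 1) := by rw [Nat.factorial_succ m']; ring
        _ = (m' + 1 + 2 * l).factorial * (m' + 1) := by rw [h3]
        _ = (m' + 1) * (m' + 1 + 2 * l).factorial := by ring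
  have hp := prod_fact l m
  calc m.factorial * ((2 * (m + l) + 1) *
        ∏ j ∈ Finset.range l, ((m + l - j) * (m + l + 1 + j)))
      = (2 * (m + l) + 1) * (m.factorial *
        ∏ j ∈ Finset.range l, ((m + l - j) * (m + l + 1 + j))) := by ring
    _ = (2 * (m + l) + 1) * (m + 2 * l).factorial := by rw [hp]
    _ = (m + 2 * l + 1) * (m + 2 * l).factorial + m * (m + 2 * l).factorial := by ring
    _ = (m + 2 * l + 1).factorial + m * (m + 2 * l).factorial := by
        rw [Nat.factorial_succ (m + 2 * l)]
    _ = (m + 2 * l + 1).choose (2 * l + 1) * (2 * l + 1).factorial * m.factorial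
        + (m + 2 * l).choose (2 * l + 1) * (2 * l + 1).factorial * m.factorial := by
        rw [h1, h2]
    _ = m.factorial * ((2 * l + 1).factorial *
        ((m + 2 * l + 1).choose (2 * l + 1) + (m + 2 * l).choose (2 * l + 1))) := by ring

theorem polylog_combination_odd (l : ℕ) (hl : 1 ≤ l) (x : ℝ) (hx : |x| < 1) :
    HasSum (fun k : ℕ =>
        (2 * (k : ℝ) + 1) * (∏ j ∈ Finset.range l, (((k : ℝ) - (j : ℝ)) * ((k : ℝ) + 1 + (j : ℝ)))) * x ^ k)
      (((2 * l + 1).factorial : ℝ) * (x ^ l * (1 + x) / (1 - x) ^ (2 * l + 2))) := by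
  have hx' : ‖x‖ < 1 := by rwa [Real.norm_eq_abs]
  set f : ℕ → ℝ := fun k =>
    (2 * (k : ℝ) + 1) * (∏ j ∈ Finset.range l, (((k : ℝ) - (j : ℝ)) * ((k : ℝ) + 1 + (j : ℝ)))) * x ^ k
    with hf
  have H := hasSum_choose_mul_geometric_of_norm_lt_one (𝕜 := ℝ) (2 * l + 1) hx'
  -- A : first piece
  have A : HasSum (fun m : ℕ =>
      ((2 * l + 1).factorial : ℝ) * ((m + 2 * l + 1).choose (2 * l + 1) : ℝ) * x ^ (m + l))
      (((2 * l + 1).factorial : ℝ) * x ^ l * (1 / (1 - x) ^ (2 * l + 2))) := by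
    have h := H.mul_left (((2 * l + 1).factorial : ℝ) * x ^ l)
    have heq : (fun m : ℕ => ((2 * l + 1).factorial : ℝ) * x ^ l *
        (((m + (2 * l + 1)).choose (2 * l + 1) : ℝ) * x ^ m)) =
        fun m : ℕ => ((2 * l + 1).factorial : ℝ) *
          ((m + 2 * l + 1).choose (2 * l + 1) : ℝ) * x ^ (m + l) := by
      funext m
      rw [show m + (2 * l + 1) = m + 2 * l + 1 by omega, pow_add]
      ring
    rw [heq] at h
    convert h using 1
  -- c : shifted second piece
  set c : ℕ → ℝ := fun m =>
    ((2 * l + 1).factorial : ℝ) * ((m + 2 * l).choose (2 * l + 1) : ℝ) * x ^ (m + l) with hc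
  have B : HasSum c (((2 * l + 1).factorial : ℝ) * x ^ (l + 1) * (1 / (1 - x) ^ (2 * l + 2))) := by
    have hB1 : HasSum (fun n : ℕ => c (n + 1))
        (((2 * l + 1).factorial : ℝ) * x ^ (l + 1) * (1 / (1 - x) ^ (2 * l + 2))) := by
      have h := H.mul_left (((2 * l + 1).factorial : ℝ) * x ^ (l + 1))
      have heq : (fun m : ℕ => ((2 * l + 1).factorial : ℝ) * x ^ (l + 1) *
          (((m + (2 * l + 1)).choose (2 * l + 1) : ℝ) * x ^ m)) =
          fun m : ℕ => c (m + 1) := by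
        funext m
        simp only [hc]
        rw [show m + 1 + 2 * l = m + (2 * l + 1) by omega,
          show m + 1 + l = (l + 1) + m by omega, pow_add]
        ring
      rw [heq] at h
      convert h using 1
    have h := (hasSum_nat_add_iff (f := c) 1).mp hB1
    simpa [hc, Nat.choose_eq_zero_of_lt (show 2 * l < 2 * l + 1 by omega)] using h
  have AB := A.add B
  have hshift : ∀ m : ℕ, f (m + l) =
      ((2 * l + 1).factorial : ℝ) * ((m + 2 * l + 1).choose (2 * l + 1) : ℝ) * x ^ (m + l)
        + c m := by
    intro m
    have hprod : (∏ j ∈ Finset.range l,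
        ((((m + l : ℕ) : ℝ)) - (j : ℝ)) * (((m + l : ℕ) : ℝ) + 1 + (j : ℝ))) =
        ((∏ j ∈ Finset.range l, ((m + l - j) * (m + l + 1 + j)) : ℕ) : ℝ) := by
      rw [Nat.cast_prod]
      refine Finset.prod_congr rfl fun j hj => ?_
      simp only [Finset.mem_range] at hj
      have hjle : j ≤ m + l := by omega
      push_cast [Nat.cast_sub hjle]
      ring
    have hkeyR : (2 * ((m + l : ℕ) : ℝ) + 1) *
        ((∏ j ∈ Finset.range l, ((m + l - j) * (m + l + 1 + j)) : ℕ) : ℝ) =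
        ((2 * l + 1).factorial : ℝ) *
          (((m + 2 * l + 1).choose (2 * l + 1) : ℝ) + ((m + 2 * l).choose (2 * l + 1) : ℝ)) := by
      exact_mod_cast congrArg (fun n : ℕ => (n : ℝ)) (key_nat l m)
    simp only [hf, hc]
    rw [hprod, hkeyR]
    ring
  have AB' : HasSum (fun m : ℕ => f (m + l))
      (((2 * l + 1).factorial : ℝ) * x ^ l * (1 / (1 - x) ^ (2 * l + 2)) +
        ((2 * l + 1).factorial : ℝ) * x ^ (l + 1) * (1 / (1 - x) ^ (2 * l + 2))) := by
    refine AB.congr_fun fun m => (hshift m)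
  have Hfinal := (hasSum_nat_add_iff (f := f) l).mp AB'
  have hzero : ∑ i ∈ Finset.range l, f i = 0 := by
    refine Finset.sum_eq_zero fun i hi => ?_
    simp only [hf]
    have : (∏ j ∈ Finset.range l, (((i : ℝ) - (j : ℝ)) * ((i : ℝ) + 1 + (j : ℝ)))) = 0 :=
      Finset.prod_eq_zero hi (by simp)
    rw [this]
    ring
  rw [hzero, add_zero] at Hfinal
  convert Hfinal using 1
  · rfl
  rw [pow_succ]
  ring
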